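/- Let (Ω,F,P) be a probability space, (E,d) a metric space, and X, Xₙ : Ω → E measurable. Suppose (a) Xₙ → X in (outer) probability, i.e. lim P*(d(X,Xₙ) ≥ ε) = 0 for all ε > 0, and (b) lim P(Xₙ ∈ O) = P(X ∈ O) for all open O ⊆ E. Then lim E|f(X) − f(Xₙ)| = 0 for every bounded Borel measurable f : E → ℝ. -/

import Mathlib

open MeasureTheory Filter Topology
open scoped ENNReal BoundedContinuousFunction

/-- Lusin's theorem for a bounded measurable real function on a metric space with a
finite Borel measure: `f` is continuous on a closed set whose complement has small measure. -/
lemma my_lusin {E : Type*} [MetricSpace E] [MeasurableSpace E] [BorelSpace E]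
    (μ : Measure E) [IsFiniteMeasure μ] (f : E → ℝ) (hf : Measurable f)
    (C : ℝ) (hC : ∀ x, |f x| ≤ C) {κ : ℝ≥0∞} (hκ : κ ≠ 0) :
    ∃ F : Set E, IsClosed F ∧ μ Fᶜ < κ ∧ ContinuousOn f F := by
  have hmem : MemLp f 1 μ :=
    (memLp_top_of_bound hf.aestronglyMeasurable C
      (Filter.Eventually.of_forall fun x => by
        simpa [Real.norm_eq_abs] using hC x)).mono_exponent le_top
  have hg : ∀ k : ℕ, ∃ g : E →ᵇ ℝ,
      eLpNorm (f - (g : E → ℝ)) 1 μ ≤ (k : ℝ≥0∞)⁻¹ ∧ MemLp (g : E → ℝ) 1 μ := fun k =>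
    hmem.exists_boundedContinuous_eLpNorm_sub_le ENNReal.one_ne_top
      (ENNReal.inv_ne_zero.mpr (by simp))
  choose g hg1 _ using hg
  have h0 : Tendsto (fun k => eLpNorm ((g k : E → ℝ) - f) 1 μ) atTop (𝓝 0) := by
    refine tendsto_of_tendsto_of_tendsto_of_le_of_le tendsto_const_nhds
      ENNReal.tendsto_inv_nat_nhds_zero (fun k => zero_le) (fun k => ?_)
    rw [eLpNorm_sub_comm]
    exact hg1 k
  have hmeas : TendstoInMeasure μ (fun k => (g k : E → ℝ)) atTop f :=
    tendstoInMeasure_of_tendsto_eLpNorm one_ne_zero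
      (fun k => (g k).continuous.aestronglyMeasurable) hf.aestronglyMeasurable h0
  obtain ⟨ns, -, hae⟩ := hmeas.exists_seq_tendsto_ae
  -- set up the small constant
  set κ' : ℝ≥0∞ := min κ 1 with hκ'def
  have hκ'0 : κ' ≠ 0 := by simp [hκ'def, hκ, min_eq_iff]
  have hκ'top : κ' ≠ ∞ := by simp [hκ'def]
  have hhalf0 : κ' / 2 ≠ 0 := (ENNReal.div_pos hκ'0 (by norm_num)).ne'
  have hhalftop : κ' / 2 ≠ ∞ := by
    simp [ENNReal.div_eq_top, hκ'top]
  have hr0 : 0 < (κ' / 2).toReal := ENNReal.toReal_pos hhalf0 hhalftop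
  obtain ⟨t, htm, htμ, htu⟩ := tendstoUniformlyOn_of_ae_tendsto'
    (fun i => (g (ns i)).continuous.stronglyMeasurable) hf.stronglyMeasurable hae hr0
  rw [ENNReal.ofReal_toReal hhalftop] at htμ
  have hFcont : ContinuousOn f tᶜ :=
    htu.continuousOn (Filter.Frequently.of_forall fun i => (g (ns i)).continuous.continuousOn)
  obtain ⟨F, hFt, hFclosed, hFd⟩ :=
    htm.compl.exists_isClosed_diff_lt (measure_ne_top μ _) hhalf0
  refine ⟨F, hFclosed, ?_, hFcont.mono hFt⟩
  have hsub : Fᶜ ⊆ t ∪ (tᶜ \ F) := by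
    intro x hx
    by_cases h : x ∈ t
    · exact Or.inl h
    · exact Or.inr ⟨h, hx⟩
  calc μ Fᶜ ≤ μ (t ∪ (tᶜ \ F)) := measure_mono hsub
    _ ≤ μ t + μ (tᶜ \ F) := measure_union_le _ _
    _ < κ' / 2 + κ' / 2 :=
        ENNReal.add_lt_add_of_le_of_lt (ne_top_of_le_ne_top hhalftop htμ) htμ hFd
    _ = κ' := ENNReal.add_halves _
    _ ≤ κ := min_le_left _ _

theorem stmt5 {Ω E : Type*} [MeasurableSpace Ω] [MetricSpace E]
    [MeasurableSpace E] [BorelSpace E]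
    (P : Measure Ω) [IsProbabilityMeasure P]
    (X : Ω → E) (Xn : ℕ → Ω → E)
    (hX : Measurable X) (hXn : ∀ n, Measurable (Xn n))
    (ha : ∀ ε : ℝ, 0 < ε →
      Tendsto (fun n => P {ω | ε ≤ dist (X ω) (Xn n ω)}) atTop (𝓝 0))
    (hb : ∀ O : Set E, IsOpen O →
      Tendsto (fun n => P (Xn n ⁻¹' O)) atTop (𝓝 (P (X ⁻¹' O)))) :
    ∀ f : E → ℝ, Measurable f → (∃ C : ℝ, ∀ x, |f x| ≤ C) →
      Tendsto (fun n => ∫ ω, |f (X ω) - f (Xn n ω)| ∂P) atTop (𝓝 0) := by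
  intro f hf hCex
  obtain ⟨C, hC⟩ := hCex
  set M : ℝ := max C 1 with hMdef
  have hM : 0 < M := lt_of_lt_of_le one_pos (le_max_right _ _)
  have hfM : ∀ x, |f x| ≤ M := fun x => (hC x).trans (le_max_left _ _)
  set μ : Measure E := P.map X with hμdef
  haveI : IsProbabilityMeasure μ := Measure.isProbabilityMeasure_map hX.aemeasurable
  rw [NormedAddCommGroup.tendsto_nhds_zero]
  intro ε hε
  set κ : ℝ≥0∞ := ENNReal.ofReal (ε / (16 * M)) with hκdef
  have hκpos : 0 < κ := ENNReal.ofReal_pos.mpr (by positivity)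
  -- Lusin
  obtain ⟨F, hFclosed, hFc, hfF⟩ := my_lusin μ f hf M hfM hκpos.ne'
  -- oscillation sets
  set U : ℕ → Set E := fun k =>
    {x : E | ∃ y ∈ F, ∃ z ∈ F, dist x y < 1/(k+1) ∧ dist x z < 1/(k+1) ∧ ε/4 < |f y - f z|}
    with hUdef
  have hUopen : ∀ k, IsOpen (U k) := by
    intro k
    rw [Metric.isOpen_iff]
    rintro x ⟨y, hyF, z, hzF, hxy, hxz, hfyz⟩
    refine ⟨1/(k+1) - max (dist x y) (dist x z), by simp only [sub_pos, max_lt_iff]; exact ⟨hxy, hxz⟩, fun x' hx' => ?_⟩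
    rw [Metric.mem_ball] at hx'
    refine ⟨y, hyF, z, hzF, ?_, ?_, hfyz⟩
    · calc dist x' y ≤ dist x' x + dist x y := dist_triangle _ _ _
        _ < (1/(k+1) - max (dist x y) (dist x z)) + dist x y := by gcongr
        _ ≤ 1/(k+1) := by
            have := le_max_left (dist x y) (dist x z); linarith
    · calc dist x' z ≤ dist x' x + dist x z := dist_triangle _ _ _
        _ < (1/(k+1) - max (dist x y) (dist x z)) + dist x z := by gcongr
        _ ≤ 1/(k+1) := by
            have := le_max_right (dist x y) (dist x z); linarith
  have hUanti : Antitone U := by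
    intro k l hkl x hx
    obtain ⟨y, hyF, z, hzF, hxy, hxz, hfyz⟩ := hx
    have hle : 1/((l:ℝ)+1) ≤ 1/((k:ℝ)+1) := by
      apply one_div_le_one_div_of_le (by positivity)
      exact_mod_cast Nat.succ_le_succ hkl
    exact ⟨y, hyF, z, hzF, hxy.trans_le hle, hxz.trans_le hle, hfyz⟩
  have hUempty : ⋂ k, U k = ∅ := by
    rw [Set.eq_empty_iff_forall_notMem]
    intro x hx
    have hxmem : ∀ k : ℕ, x ∈ U k := fun k => Set.mem_iInter.mp hx k
    have hxF : x ∈ F := by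
      rw [← hFclosed.closure_eq, Metric.mem_closure_iff]
      intro r hr
      obtain ⟨k, hk⟩ := exists_nat_one_div_lt hr
      obtain ⟨y, hyF, z, hzF, hxy, -, -⟩ := hxmem k
      exact ⟨y, hyF, hxy.trans hk⟩
    have hcw := hfF x hxF
    rw [Metric.continuousWithinAt_iff] at hcw
    obtain ⟨r, hr0, hr⟩ := hcw (ε/8) (by positivity)
    obtain ⟨k, hk⟩ := exists_nat_one_div_lt hr0
    obtain ⟨y, hyF, z, hzF, hxy, hxz, hfyz⟩ := hxmem k
    have h1 : |f y - f x| < ε/8 := by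
      have := hr hyF (by rw [dist_comm]; exact hxy.trans hk)
      rwa [Real.dist_eq] at this
    have h2 : |f z - f x| < ε/8 := by
      have := hr hzF (by rw [dist_comm]; exact hxz.trans hk)
      rwa [Real.dist_eq] at this
    have : |f y - f z| ≤ |f y - f x| + |f z - f x| := by
      rw [show f y - f z = (f y - f x) - (f z - f x) by ring]
      exact abs_sub _ _
    linarith
  have htendU : Tendsto (fun k => μ (U k)) atTop (𝓝 0) := by
    have h := tendsto_measure_iInter_atTop (μ := μ)
      (fun k => (hUopen k).measurableSet.nullMeasurableSet) hUanti ⟨0, measure_ne_top _ _⟩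
    rw [hUempty] at h
    simpa [Function.comp_def] using h
  obtain ⟨k₀, hk₀⟩ := (htendU.eventually_lt_const hκpos).exists
  set η : ℝ := 1/(k₀+1) with hηdef
  have hη : 0 < η := by positivity
  have hkey : ∀ x z, x ∈ F → z ∈ F → x ∉ U k₀ → dist x z < η → |f x - f z| ≤ ε/4 := by
    intro x z hxF hzF hxU hd
    by_contra h
    push_neg at h
    exact hxU ⟨x, hxF, z, hzF, by rw [dist_self]; positivity, hd, h⟩
  -- eventual bounds
  have hPXF : P (X ⁻¹' Fᶜ) = μ Fᶜ := (Measure.map_apply hX hFclosed.measurableSet.compl).symm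
  have hPXU : P (X ⁻¹' U k₀) = μ (U k₀) := (Measure.map_apply hX (hUopen k₀).measurableSet).symm
  have h1 : ∀ᶠ n in atTop, P (Xn n ⁻¹' Fᶜ) < κ :=
    (hb Fᶜ hFclosed.isOpen_compl).eventually_lt_const (hPXF ▸ hFc)
  have h2 : ∀ᶠ n in atTop, P {ω | η ≤ dist (X ω) (Xn n ω)} < κ :=
    (ha η hη).eventually_lt_const hκpos
  filter_upwards [h1, h2] with n hn1 hn2
  set Bad : Set Ω := X ⁻¹' Fᶜ ∪ Xn n ⁻¹' Fᶜ ∪ X ⁻¹' (U k₀) ∪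
    toMeasurable P {ω | η ≤ dist (X ω) (Xn n ω)} with hBaddef
  have hBadm : MeasurableSet Bad :=
    (((hX hFclosed.measurableSet.compl).union ((hXn n) hFclosed.measurableSet.compl)).union
      (hX (hUopen k₀).measurableSet)).union (measurableSet_toMeasurable _ _)
  have habs : ∀ ω, |f (X ω) - f (Xn n ω)| ≤ 2 * M := by
    intro ω
    have h1' := hfM (X ω)
    have h2' := hfM (Xn n ω)
    calc |f (X ω) - f (Xn n ω)| ≤ |f (X ω)| + |f (Xn n ω)| := abs_sub _ _
      _ ≤ 2 * M := by linarith
  have hpt : ∀ ω, |f (X ω) - f (Xn n ω)| ≤ ε/4 + Bad.indicator (fun _ => 2*M) ω := by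
    intro ω
    by_cases hω : ω ∈ Bad
    · rw [Set.indicator_of_mem hω]
      have := habs ω
      linarith
    · rw [Set.indicator_of_notMem hω, add_zero]
      simp only [hBaddef, Set.mem_union, not_or, Set.mem_preimage, Set.mem_compl_iff,
        not_not] at hω
      obtain ⟨⟨⟨hA, hB⟩, hU'⟩, hT⟩ := hω
      have hd : dist (X ω) (Xn n ω) < η := by
        by_contra h
        push_neg at h
        exact hT (subset_toMeasurable P _ h)
      exact hkey _ _ hA hB hU' hd
  have hint1 : Integrable (fun ω => |f (X ω) - f (Xn n ω)|) P :=
    (memLp_top_of_bound ((hf.comp hX).sub (hf.comp (hXn n))).abs.aestronglyMeasurable (2*M)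
      (Filter.Eventually.of_forall fun ω => by
        simpa [Real.norm_eq_abs, abs_abs] using habs ω)).integrable le_top
  have hint2 : Integrable (fun ω => ε/4 + Bad.indicator (fun _ => 2*M) ω) P :=
    (integrable_const _).add ((integrable_const (2*M)).indicator hBadm)
  have hI : ∫ ω, |f (X ω) - f (Xn n ω)| ∂P ≤ ε/4 + (P Bad).toReal * (2*M) := by
    calc ∫ ω, |f (X ω) - f (Xn n ω)| ∂P
        ≤ ∫ ω, (ε/4 + Bad.indicator (fun _ => 2*M) ω) ∂P := integral_mono hint1 hint2 hpt
      _ = ε/4 + (P Bad).toReal * (2*M) := by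
          rw [integral_add (integrable_const _) ((integrable_const _).indicator hBadm),
            integral_const, integral_indicator_const _ hBadm]
          simp [measure_univ, Measure.real]
  have hPB : P Bad ≤ 4 * κ := by
    have hκκ : P (X ⁻¹' Fᶜ) ≤ κ := le_of_lt (hPXF ▸ hFc)
    have hκU : P (X ⁻¹' U k₀) ≤ κ := le_of_lt (hPXU ▸ hk₀)
    have hκT : P (toMeasurable P {ω | η ≤ dist (X ω) (Xn n ω)}) ≤ κ := by
      rw [measure_toMeasurable]
      exact hn2.le
    calc P Bad ≤ P (X ⁻¹' Fᶜ ∪ Xn n ⁻¹' Fᶜ ∪ X ⁻¹' (U k₀)) +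
          P (toMeasurable P {ω | η ≤ dist (X ω) (Xn n ω)}) := measure_union_le _ _
      _ ≤ (P (X ⁻¹' Fᶜ ∪ Xn n ⁻¹' Fᶜ) + P (X ⁻¹' (U k₀))) +
          P (toMeasurable P {ω | η ≤ dist (X ω) (Xn n ω)}) := by
            gcongr
            exact measure_union_le _ _
      _ ≤ ((P (X ⁻¹' Fᶜ) + P (Xn n ⁻¹' Fᶜ)) + P (X ⁻¹' (U k₀))) +
          P (toMeasurable P {ω | η ≤ dist (X ω) (Xn n ω)}) := by
            gcongr
            exact measure_union_le _ _
      _ ≤ ((κ + κ) + κ) + κ := add_le_add (add_le_add (add_le_add hκκ hn1.le) hκU) hκT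
      _ = 4 * κ := by ring
  have hBtoReal : (P Bad).toReal ≤ ε / (4*M) := by
    have h4κ : (4 * κ : ℝ≥0∞) ≠ ∞ := ENNReal.mul_ne_top (by norm_num) ENNReal.ofReal_ne_top
    have := ENNReal.toReal_mono h4κ hPB
    rw [ENNReal.toReal_mul, hκdef, ENNReal.toReal_ofReal (by positivity)] at this
    calc (P Bad).toReal ≤ (4 : ℝ≥0∞).toReal * (ε / (16 * M)) := this
      _ = ε / (4*M) := by
          rw [show ((4 : ℝ≥0∞)).toReal = (4:ℝ) by simp]
          field_simp
          ring
  have hnonneg : 0 ≤ ∫ ω, |f (X ω) - f (Xn n ω)| ∂P :=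
    integral_nonneg fun ω => abs_nonneg _
  rw [Real.norm_of_nonneg hnonneg]
  have hfinal : (P Bad).toReal * (2*M) ≤ ε / 2 := by
    have := mul_le_mul_of_nonneg_right hBtoReal (by positivity : (0:ℝ) ≤ 2*M)
    calc (P Bad).toReal * (2*M) ≤ (ε / (4*M)) * (2*M) := this
      _ = ε / 2 := by field_simp; ring
  linarith
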